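/- (Non-B-robustness of the minimum RP estimators: unboundedness of the RP score in the covariates.) Fix α ≥ 0 and a parameter β of the PLRM, and suppose there exists a sequence (x_n) in ℝ^{k+1} with ‖x_n‖₂ → ∞ and π_1(x_n,β) = 1/2 for all n. Then ‖Ψ_α(β, x_n, e_1)‖₂ → ∞ as n → ∞, where e_1 is the first standard basis vector of ℝ^{d+1}. In particular the score function Ψ_α(β,·,·), and hence the influence function of the minimum RP estimator, is unbounded in the covariate. -/

import Mathlib

open Matrix Filter

noncomputable section

/-- PLRM probabilities. -/
def plrmPi {d k : ℕ} (x : Fin (k + 1) → ℝ) (β : Fin d → Fin (k + 1) → ℝ)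
    (j : Fin (d + 1)) : ℝ :=
  (if h : (j : ℕ) < d then Real.exp (∑ t, x t * β ⟨j, h⟩ t) else 1) /
    (1 + ∑ s : Fin d, Real.exp (∑ t, x t * β s t))

/-- `Γ(α) = ∑_{j=1}^{d+1} π_j(x,β)^{α+1}`. -/
def Gam {d k : ℕ} (α : ℝ) (x : Fin (k + 1) → ℝ) (β : Fin d → Fin (k + 1) → ℝ) : ℝ :=
  ∑ j, plrmPi x β j ^ (α + 1)

/-- `Υ(α,y) = ∑_{j=1}^{d+1} π_j(x,β)^α y_j`. -/
def Ups {d k : ℕ} (α : ℝ) (x : Fin (k + 1) → ℝ) (β : Fin d → Fin (k + 1) → ℝ)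
    (y : Fin (d + 1) → ℝ) : ℝ :=
  ∑ j, plrmPi x β j ^ α * y j

/-- The RP score `Ψ_α(β,x,y) ∈ ℝ^{d(k+1)}`, indexed by block `m` and coordinate `t`. -/
def psiVec {d k : ℕ} (α : ℝ) (x : Fin (k + 1) → ℝ) (β : Fin d → Fin (k + 1) → ℝ)
    (y : Fin (d + 1) → ℝ) : Fin d × Fin (k + 1) → ℝ :=
  fun p =>
    Gam α x β ^ (-(α / (1 + α))) *
      (plrmPi x β p.1.castSucc ^ α * y p.1.castSucc -
        Ups α x β y / Gam α x β * plrmPi x β p.1.castSucc ^ (α + 1)) * x p.2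

lemma plrmPi_pos {d k : ℕ} (x : Fin (k + 1) → ℝ) (β : Fin d → Fin (k + 1) → ℝ)
    (j : Fin (d + 1)) : 0 < plrmPi x β j := by
  unfold plrmPi
  apply div_pos
  · split <;> positivity
  · positivity

lemma plrmPi_sum {d k : ℕ} (x : Fin (k + 1) → ℝ) (β : Fin d → Fin (k + 1) → ℝ) :
    ∑ j, plrmPi x β j = 1 := by
  have hcast : ∀ i : Fin d, plrmPi x β i.castSucc
      = Real.exp (∑ t, x t * β i t) / (1 + ∑ s, Real.exp (∑ t, x t * β s t)) := by
    intro i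
    unfold plrmPi
    rw [dif_pos (by simpa using i.isLt)]
    simp
  have hlast : plrmPi x β (Fin.last d)
      = 1 / (1 + ∑ s, Real.exp (∑ t, x t * β s t)) := by
    unfold plrmPi
    rw [dif_neg (by simp)]
  rw [Fin.sum_univ_castSucc]
  simp only [hcast, hlast]
  rw [← Finset.sum_div, ← add_div, div_eq_one_iff_eq]
  · ring
  · positivity

lemma plrmPi_le_one {d k : ℕ} (x : Fin (k + 1) → ℝ) (β : Fin d → Fin (k + 1) → ℝ)
    (j : Fin (d + 1)) : plrmPi x β j ≤ 1 := by
  rw [← plrmPi_sum x β]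
  exact Finset.single_le_sum (fun i _ => (plrmPi_pos x β i).le) (Finset.mem_univ j)

/-- non-B-robustness of the minimum RP estimators: fix `α ≥ 0` and a
parameter `β`; if `(x_n)` is a sequence of covariates with `‖x_n‖₂ → ∞` and
`π_1(x_n,β) = 1/2` for all `n`, then `‖Ψ_α(β,x_n,e_1)‖₂ → ∞`. -/
theorem statement17 (d k : ℕ) (hd : 1 ≤ d) (hk : 1 ≤ k) (α : ℝ) (hα : 0 ≤ α)
    (β : Fin d → Fin (k + 1) → ℝ) (X : ℕ → Fin (k + 1) → ℝ)
    (hnorm : Tendsto (fun n => Real.sqrt (∑ t, X n t ^ 2)) atTop atTop)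
    (hhalf : ∀ n, plrmPi (X n) β 0 = 1 / 2) :
    Tendsto (fun n => Real.sqrt (∑ p : Fin d × Fin (k + 1),
        psiVec α (X n) β (Pi.single (0 : Fin (d + 1)) 1) p ^ 2)) atTop atTop := by
  have hd0 : (0:ℝ) < d := by exact_mod_cast hd
  set c : ℝ := (1/2 : ℝ) ^ α * (1/(2*d) : ℝ) ^ (α+1) with hc
  have hcpos : 0 < c := by
    apply mul_pos <;> apply Real.rpow_pos_of_pos <;> positivity
  have key : ∀ n, c * Real.sqrt (∑ t, X n t ^ 2)
      ≤ Real.sqrt (∑ p : Fin d × Fin (k + 1),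
        psiVec α (X n) β (Pi.single (0 : Fin (d + 1)) 1) p ^ 2) := by
    intro n
    set x := X n with hx
    -- basic facts
    have hpi0 : plrmPi x β 0 = 1/2 := hhalf n
    have hGpos : 0 < Gam α x β :=
      Finset.sum_pos (fun j _ => Real.rpow_pos_of_pos (plrmPi_pos x β j) _)
        ⟨0, Finset.mem_univ 0⟩
    have hGle1 : Gam α x β ≤ 1 := by
      calc Gam α x β ≤ ∑ j, plrmPi x β j := by
            apply Finset.sum_le_sum
            intro j _
            calc plrmPi x β j ^ (α+1) ≤ plrmPi x β j ^ (1:ℝ) :=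
                  Real.rpow_le_rpow_of_exponent_ge (plrmPi_pos x β j)
                    (plrmPi_le_one x β j) (by linarith)
              _ = plrmPi x β j := Real.rpow_one _
        _ = 1 := plrmPi_sum x β
    -- some j ≠ 0 with 1/(2d) ≤ π_j
    obtain ⟨j, hjmem, hjge⟩ : ∃ j ∈ (Finset.univ.erase (0 : Fin (d+1))),
        (1/(2*d):ℝ) ≤ plrmPi x β j := by
      apply Finset.exists_le_of_sum_le
      · refine ⟨⟨1, by omega⟩, Finset.mem_erase.2 ⟨?_, Finset.mem_univ _⟩⟩
        simp [Fin.ext_iff]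
      · have hcard : (Finset.univ.erase (0 : Fin (d+1))).card = d := by
          simp
        have hsum : ∑ j ∈ Finset.univ.erase (0 : Fin (d+1)), plrmPi x β j = 1/2 := by
          have := Finset.sum_erase_add Finset.univ (plrmPi x β) (Finset.mem_univ (0 : Fin (d+1)))
          rw [plrmPi_sum x β] at this
          rw [hpi0] at this
          linarith
        rw [Finset.sum_const, hcard, hsum]
        rw [nsmul_eq_mul]
        rw [mul_one_div]
        rw [div_le_div_iff₀ (by positivity) (by norm_num)]
        ring_nf
        nlinarith
    have hjne : j ≠ 0 := (Finset.mem_erase.1 hjmem).1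
    -- Γ lower bound
    have hGlow : (1/2:ℝ)^(α+1) + (1/(2*d):ℝ)^(α+1) ≤ Gam α x β := by
      have hsub : ({(0 : Fin (d+1)), j} : Finset _) ⊆ Finset.univ := Finset.subset_univ _
      have := Finset.sum_le_sum_of_subset_of_nonneg hsub
        (f := fun j => plrmPi x β j ^ (α+1))
        (fun i _ _ => (Real.rpow_pos_of_pos (plrmPi_pos x β i) _).le)
      rw [Finset.sum_pair (Ne.symm hjne)] at this
      refine le_trans ?_ this
      rw [hpi0]
      gcongr
    -- the scalar factor
    set G := Gam α x β ^ (-(α / (1 + α))) with hG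
    have hG1 : 1 ≤ G := by
      rw [hG]
      calc (1:ℝ) = Gam α x β ^ (0:ℝ) := (Real.rpow_zero _).symm
        _ ≤ Gam α x β ^ (-(α / (1 + α))) :=
            Real.rpow_le_rpow_of_exponent_ge hGpos hGle1 (neg_nonpos.2 (by positivity))
    have hUps : Ups α x β (Pi.single (0 : Fin (d+1)) 1) = (1/2:ℝ)^α := by
      unfold Ups
      rw [Finset.sum_eq_single (0 : Fin (d+1))]
      · simp [hpi0]
      · intro b _ hb; simp [Pi.single_apply, hb]
      · simp
    set F := (1/2:ℝ)^α - Ups α x β (Pi.single (0 : Fin (d+1)) 1) / Gam α x β * (1/2:ℝ)^(α+1)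
      with hF
    have hFc : c ≤ F := by
      rw [hF, hUps]
      have h1 : (1/2:ℝ)^α / Gam α x β * (1/2:ℝ)^(α+1)
          = (1/2:ℝ)^α * ((1/2:ℝ)^(α+1) / Gam α x β) := by ring
      rw [h1]
      have h2 : (1/2:ℝ)^α - (1/2:ℝ)^α * ((1/2:ℝ)^(α+1) / Gam α x β)
          = (1/2:ℝ)^α * ((Gam α x β - (1/2:ℝ)^(α+1)) / Gam α x β) := by
        field_simp
      rw [h2, hc]
      apply mul_le_mul_of_nonneg_left _ (by positivity)
      have hm : (0:ℝ) < (1/(2*d):ℝ)^(α+1) := Real.rpow_pos_of_pos (by positivity) _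
      calc (1/(2*d):ℝ)^(α+1) ≤ (1/(2*d):ℝ)^(α+1) / Gam α x β := by
            rw [le_div_iff₀ hGpos]
            nlinarith
        _ ≤ (Gam α x β - (1/2:ℝ)^(α+1)) / Gam α x β := by
            gcongr
            linarith
    -- psi at block m0
    set m0 : Fin d := ⟨0, hd⟩ with hm0
    have hm0c : m0.castSucc = (0 : Fin (d+1)) := by
      ext
      simp [hm0]
    have hpsi : ∀ t, psiVec α x β (Pi.single (0 : Fin (d+1)) 1) (m0, t) = G * F * x t := by
      intro t
      show Gam α x β ^ (-(α / (1 + α))) * _ * x t = _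
      rw [hm0c, hpi0, Pi.single_eq_same, hF, hG]
      ring
    have hcGF : c ≤ G * F :=
      le_trans hFc (le_mul_of_one_le_left (le_trans hcpos.le hFc) hG1)
    have h1 : ∑ t, psiVec α x β (Pi.single (0 : Fin (d+1)) 1) (m0, t) ^ 2
        ≤ ∑ p : Fin d × Fin (k + 1), psiVec α x β (Pi.single (0 : Fin (d+1)) 1) p ^ 2 := by
      rw [Fintype.sum_prod_type]
      exact Finset.single_le_sum
        (f := fun m => ∑ t, psiVec α x β (Pi.single (0 : Fin (d+1)) 1) (m, t) ^ 2)
        (fun m _ => Finset.sum_nonneg fun t _ => sq_nonneg _) (Finset.mem_univ m0)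
    have h2 : c^2 * ∑ t, x t ^ 2
        ≤ ∑ t, psiVec α x β (Pi.single (0 : Fin (d+1)) 1) (m0, t) ^ 2 := by
      rw [Finset.mul_sum]
      apply Finset.sum_le_sum
      intro t _
      rw [hpsi t]
      have he : (G*F*x t)^2 = (G*F)^2 * x t^2 := by ring
      rw [he]
      have := pow_le_pow_left₀ hcpos.le hcGF 2
      nlinarith [sq_nonneg (x t)]
    calc c * Real.sqrt (∑ t, x t ^ 2) = Real.sqrt (c^2 * ∑ t, x t ^ 2) := by
          rw [Real.sqrt_mul (sq_nonneg c), Real.sqrt_sq hcpos.le]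
      _ ≤ _ := Real.sqrt_le_sqrt (le_trans h2 h1)
  exact tendsto_atTop_mono key (hnorm.const_mul_atTop hcpos)


end
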